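/- Let x̲ ≤ x₁* < x₂* ≤ x̄ and let f₁, f₂ : [x̲, x̄] → ℝ be continuously differentiable with, for each j ∈ {1,2}, f_j'(x) > 0 for x < x_j* and f_j'(x) < 0 for x > x_j*, and suppose x ↦ f₁'(x)/f₂'(x) is strictly decreasing on (x₁*, x₂*). If moreover f₁(x₂*) < f₂(x₂*) and f₂(x₁*) < f₁(x₁*) (case C3), then there is a unique point x̄₀ ∈ (x₁*, x₂*) with f₁(x̄₀) = f₂(x̄₀), and inf over λ ∈ [0,1] of sup over x ∈ [x₁*, x₂*] of ( λ·f₁(x) + (1−λ)·f₂(x) ) equals f₁(x̄₀). -/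

import Mathlib

open Set

/-- Proposition 11 (second part): in case C3 with a strictly decreasing derivative
ratio, there is a unique crossing point x̄₀ ∈ (x₁*, x₂*) of f₁ and f₂, and the dual
min–max lower-bound problem is solved by x̄₀ with value f₁(x̄₀). -/
theorem dual_single_question_C3
    (xlo xhi x₁s x₂s : ℝ) (h₁ : xlo ≤ x₁s) (h₁₂ : x₁s < x₂s) (h₂ : x₂s ≤ xhi)
    (f₁ f₂ f₁' f₂' : ℝ → ℝ)
    (hd₁ : ∀ x ∈ Icc xlo xhi, HasDerivWithinAt f₁ (f₁' x) (Icc xlo xhi) x)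
    (hd₂ : ∀ x ∈ Icc xlo xhi, HasDerivWithinAt f₂ (f₂' x) (Icc xlo xhi) x)
    (hc₁ : ContinuousOn f₁' (Icc xlo xhi)) (hc₂ : ContinuousOn f₂' (Icc xlo xhi))
    (hs₁p : ∀ x ∈ Icc xlo xhi, x < x₁s → 0 < f₁' x)
    (hs₁n : ∀ x ∈ Icc xlo xhi, x₁s < x → f₁' x < 0)
    (hs₂p : ∀ x ∈ Icc xlo xhi, x < x₂s → 0 < f₂' x)
    (hs₂n : ∀ x ∈ Icc xlo xhi, x₂s < x → f₂' x < 0)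
    (hratio : StrictAntiOn (fun x => f₁' x / f₂' x) (Ioo x₁s x₂s))
    (hC3a : f₁ x₂s < f₂ x₂s) (hC3b : f₂ x₁s < f₁ x₁s) :
    ∃ x₀ ∈ Ioo x₁s x₂s, f₁ x₀ = f₂ x₀ ∧
      (∀ y ∈ Ioo x₁s x₂s, f₁ y = f₂ y → y = x₀) ∧
      sInf {v : ℝ | ∃ l ∈ Icc (0:ℝ) 1,
          v = sSup ((fun x => l * f₁ x + (1 - l) * f₂ x) '' Icc x₁s x₂s)} = f₁ x₀ := by
  have hsub : Icc x₁s x₂s ⊆ Icc xlo xhi := Icc_subset_Icc h₁ h₂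
  have hco₁ : ContinuousOn f₁ (Icc xlo xhi) := fun x hx => (hd₁ x hx).continuousWithinAt
  have hco₂ : ContinuousOn f₂ (Icc xlo xhi) := fun x hx => (hd₂ x hx).continuousWithinAt
  -- g = f₁ - f₂ is strictly decreasing on [x₁s, x₂s]
  set g : ℝ → ℝ := fun x => f₁ x - f₂ x with hg
  have hIooSub : Ioo x₁s x₂s ⊆ Icc xlo xhi := subset_trans Ioo_subset_Icc_self hsub
  have hganti : StrictAntiOn g (Icc x₁s x₂s) := by
    apply strictAntiOn_of_hasDerivWithinAt_neg (convex_Icc _ _)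
      ((hco₁.mono hsub).sub (hco₂.mono hsub)) (f' := fun x => f₁' x - f₂' x)
    · intro x hx
      rw [interior_Icc] at hx ⊢
      exact (((hd₁ x (hIooSub hx)).sub (hd₂ x (hIooSub hx))).mono hIooSub)
    · intro x hx
      rw [interior_Icc] at hx
      have h1 := hs₁n x (hIooSub hx) hx.1
      have h2 := hs₂p x (hIooSub hx) (hx.2.trans_le (le_refl _))
      linarith
  -- existence of the crossing point
  have hgcont : ContinuousOn g (Icc x₁s x₂s) := (hco₁.mono hsub).sub (hco₂.mono hsub)
  have h0mem : (0:ℝ) ∈ Ioo (g x₂s) (g x₁s) := by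
    constructor <;> simp [hg] <;> linarith
  obtain ⟨x₀, hx₀mem, hx₀⟩ := intermediate_value_Ioo' (le_of_lt h₁₂) hgcont h0mem
  have hfeq : f₁ x₀ = f₂ x₀ := by
    have : f₁ x₀ - f₂ x₀ = 0 := hx₀
    linarith
  refine ⟨x₀, hx₀mem, hfeq, ?_, ?_⟩
  · -- uniqueness
    intro y hy hye
    by_contra hne
    rcases lt_or_gt_of_ne hne with h | h
    · have := hganti (Ioo_subset_Icc_self hy) (Ioo_subset_Icc_self hx₀mem) h
      simp only [hg] at this
      linarith
    · have := hganti (Ioo_subset_Icc_self hx₀mem) (Ioo_subset_Icc_self hy) h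
      simp only [hg] at this
      linarith
  · -- the minimax value
    set a := f₁' x₀ with ha
    set b := f₂' x₀ with hb
    have hx₀I : x₀ ∈ Icc xlo xhi := hIooSub hx₀mem
    have haneg : a < 0 := hs₁n x₀ hx₀I hx₀mem.1
    have hbpos : 0 < b := hs₂p x₀ hx₀I hx₀mem.2
    have hba : 0 < b - a := by linarith
    set l : ℝ := b / (b - a) with hl
    have hl0 : 0 < l := div_pos hbpos hba
    have hl1 : l < 1 := by rw [hl, div_lt_one hba]; linarith
    set h : ℝ → ℝ := fun x => l * f₁ x + (1 - l) * f₂ x with hh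
    have hkey : l * (a / b) + (1 - l) = 0 := by
      field_simp [hl]
      rw [hl]; linear_combination -(div_mul_cancel₀ b hba.ne')
    -- derivative sign for h
    have hderivsign : ∀ x ∈ Ioo x₁s x₂s,
        (x < x₀ → 0 < l * f₁' x + (1 - l) * f₂' x) ∧
        (x₀ < x → l * f₁' x + (1 - l) * f₂' x < 0) := by
      intro x hx
      have hb2 : 0 < f₂' x := hs₂p x (hIooSub hx) hx.2
      have hfactor : l * f₁' x + (1 - l) * f₂' x
          = f₂' x * (l * (f₁' x / f₂' x) + (1 - l)) := by
        field_simp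
      constructor
      · intro hlt
        have hr := hratio hx hx₀mem hlt
        simp only at hr
        have : 0 < l * (f₁' x / f₂' x) + (1 - l) := by nlinarith
        rw [hfactor]; positivity
      · intro hlt
        have hr := hratio hx₀mem hx hlt
        simp only at hr
        have hneg : l * (f₁' x / f₂' x) + (1 - l) < 0 := by nlinarith
        rw [hfactor]; nlinarith
    have hhc : ContinuousOn h (Icc x₁s x₂s) :=
      (continuousOn_const.mul (hco₁.mono hsub)).add
        (continuousOn_const.mul (hco₂.mono hsub))
    -- h strictly increasing on [x₁s, x₀]
    have hmono : StrictMonoOn h (Icc x₁s x₀) := by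
      apply strictMonoOn_of_hasDerivWithinAt_pos (convex_Icc _ _)
        (hhc.mono (Icc_subset_Icc le_rfl (le_of_lt hx₀mem.2)))
        (f' := fun x => l * f₁' x + (1 - l) * f₂' x)
      · intro x hx
        rw [interior_Icc] at hx ⊢
        have hxI : x ∈ Icc xlo xhi := hIooSub ⟨hx.1, hx.2.trans hx₀mem.2⟩
        exact (((hd₁ x hxI).const_mul l).add ((hd₂ x hxI).const_mul (1-l))).mono
          (fun y hy => hIooSub ⟨hy.1, hy.2.trans hx₀mem.2⟩)
      · intro x hx
        rw [interior_Icc] at hx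
        exact (hderivsign x ⟨hx.1, hx.2.trans hx₀mem.2⟩).1 hx.2
    have hanti : StrictAntiOn h (Icc x₀ x₂s) := by
      apply strictAntiOn_of_hasDerivWithinAt_neg (convex_Icc _ _)
        (hhc.mono (Icc_subset_Icc (le_of_lt hx₀mem.1) le_rfl))
        (f' := fun x => l * f₁' x + (1 - l) * f₂' x)
      · intro x hx
        rw [interior_Icc] at hx ⊢
        have hxI : x ∈ Icc xlo xhi := hIooSub ⟨hx₀mem.1.trans hx.1, hx.2⟩
        exact (((hd₁ x hxI).const_mul l).add ((hd₂ x hxI).const_mul (1-l))).mono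
          (fun y hy => hIooSub ⟨hx₀mem.1.trans hy.1, hy.2⟩)
      · intro x hx
        rw [interior_Icc] at hx
        exact (hderivsign x ⟨hx₀mem.1.trans hx.1, hx.2⟩).2 hx.1
    have hx₀Icc : x₀ ∈ Icc x₁s x₂s := Ioo_subset_Icc_self hx₀mem
    have hmax : ∀ x ∈ Icc x₁s x₂s, h x ≤ h x₀ := by
      intro x hx
      rcases lt_trichotomy x x₀ with hlt | heq | hgt
      · exact le_of_lt (hmono ⟨hx.1, le_of_lt hlt⟩ ⟨hx.1.trans (le_of_lt hlt), le_rfl⟩ hlt)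
      · rw [heq]
      · exact le_of_lt (hanti ⟨le_rfl, hx.2.trans' (le_of_lt hgt)⟩ ⟨le_of_lt hgt, hx.2⟩ hgt)
    have hhx₀ : h x₀ = f₁ x₀ := by
      simp only [hh]; rw [← hfeq]; ring
    have hgreat : IsGreatest (h '' Icc x₁s x₂s) (f₁ x₀) := by
      constructor
      · exact ⟨x₀, hx₀Icc, hhx₀⟩
      · rintro v ⟨x, hx, rfl⟩
        rw [← hhx₀]; exact hmax x hx
    set S := {v : ℝ | ∃ l' ∈ Icc (0:ℝ) 1,
        v = sSup ((fun x => l' * f₁ x + (1 - l') * f₂ x) '' Icc x₁s x₂s)} with hS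
    have hmemS : f₁ x₀ ∈ S := by
      refine ⟨l, ⟨le_of_lt hl0, le_of_lt hl1⟩, ?_⟩
      rw [hgreat.csSup_eq]
    have hlb : ∀ v ∈ S, f₁ x₀ ≤ v := by
      rintro v ⟨l', hl', rfl⟩
      have hcl : ContinuousOn (fun x => l' * f₁ x + (1 - l') * f₂ x) (Icc x₁s x₂s) :=
        (continuousOn_const.mul (hco₁.mono hsub)).add
          (continuousOn_const.mul (hco₂.mono hsub))
      have hbdd : BddAbove ((fun x => l' * f₁ x + (1 - l') * f₂ x) '' Icc x₁s x₂s) :=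
        (isCompact_Icc.image_of_continuousOn hcl).bddAbove
      have hv : l' * f₁ x₀ + (1 - l') * f₂ x₀
          ≤ sSup ((fun x => l' * f₁ x + (1 - l') * f₂ x) '' Icc x₁s x₂s) :=
        le_csSup hbdd ⟨x₀, hx₀Icc, rfl⟩
      have : l' * f₁ x₀ + (1 - l') * f₂ x₀ = f₁ x₀ := by rw [← hfeq]; ring
      linarith
    exact le_antisymm (csInf_le ⟨f₁ x₀, hlb⟩ hmemS) (le_csInf ⟨f₁ x₀, hmemS⟩ hlb)
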